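/- arXiv:2503.08615 — 2 statements merged into one kernel-verified Lean document; each statement's English description precedes it below -/
import Mathlib

section
/- If H is a breakable monoid (i.e. xy ∈ {x, y} for all x, y ∈ H), then 𝒫fin,1(H) is UmF. -/
open scoped Pointwise

section Defs

variable {M : Type*} [Monoid M]

/-- `x` divides `y` (two-sidedly) in a monoid: `y = u * x * v` for some `u v`. -/
def dvdTS (x y : M) : Prop := ∃ u v : M, y = u * x * v

/-- A non-unit-divisor: an element that does not divide `1`. -/
def isNonUnitDivisor (x : M) : Prop := ¬ dvdTS x 1

/-- `x` properly divides `y`: `x` divides `y` but `y` does not divide `x`. -/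
def properDvdTS (x y : M) : Prop := dvdTS x y ∧ ¬ dvdTS y x

/-- An irreducible: a non-unit-divisor `a` with `a ≠ x * y` whenever `x, y` are
non-unit-divisors properly dividing `a`. -/
def isIrred (a : M) : Prop :=
  isNonUnitDivisor a ∧
    ∀ x y : M, isNonUnitDivisor x → isNonUnitDivisor y →
      properDvdTS x a → properDvdTS y a → a ≠ x * y

/-- An atom: a non-unit-divisor that is not a product of two non-unit-divisors. -/
def isAtomTS (a : M) : Prop :=
  isNonUnitDivisor a ∧ ∀ x y : M, isNonUnitDivisor x → isNonUnitDivisor y → a ≠ x * y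

/-- A quark: a non-unit-divisor not properly divided by any non-unit-divisor. -/
def isQuarkTS (a : M) : Prop :=
  isNonUnitDivisor a ∧ ∀ x : M, isNonUnitDivisor x → ¬ properDvdTS x a

/-- A factorization of `x` into irreducibles, recorded as a list. -/
def IsFactorization (l : List M) (x : M) : Prop :=
  (∀ a ∈ l, isIrred a) ∧ l.prod = x

/-- A minimal factorization: a factorization of `x` such that no product, in any order,
of a proper sub-multiset of its factors equals `x`. -/
def IsMinimalFactorization (l : List M) (x : M) : Prop :=
  IsFactorization l x ∧
    ∀ l' : List M, (↑l' : Multiset M) < (↑l : Multiset M) → l'.prod ≠ x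

end Defs

/-- A unique minimal factorization (UmF) monoid: every non-identity element has a minimal
factorization into irreducibles, unique up to permutation of the factors. -/
def IsUmF (M : Type*) [Monoid M] : Prop :=
  (∀ x : M, x ≠ 1 → ∃ l : List M, IsMinimalFactorization l x) ∧
    ∀ x : M, ∀ l l' : List M,
      IsMinimalFactorization l x → IsMinimalFactorization l' x → l.Perm l'

/-- The reduced finitary power monoid `𝒫fin,1(H)` of a monoid `H`: the submonoid of
`Finset H` (under pointwise multiplication) of finite subsets containing `1`. -/
def redPow (H : Type*) [Monoid H] [DecidableEq H] : Submonoid (Finset H) where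
  carrier := {X : Finset H | (1 : H) ∈ X}
  one_mem' := by simp
  mul_mem' := by
    intro X Y hX hY
    simpa using Finset.mul_mem_mul hX hY

namespace Stmt18Aux

variable {H : Type*} [Monoid H] [DecidableEq H]

lemma one_mem_val (X : redPow H) : (1 : H) ∈ (X : Finset H) := X.2

lemma pair_mem (a : H) : (insert 1 {a} : Finset H) ∈ redPow H :=
  Finset.mem_insert_self 1 {a}

/-- the irreducible `{1, a}` -/
def pair (a : H) : redPow H := ⟨insert 1 {a}, pair_mem a⟩

variable (hbr : ∀ x y : H, x * y = x ∨ x * y = y)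
include hbr

lemma val_mul (X Y : redPow H) :
    ((X * Y : redPow H) : Finset H) = (X : Finset H) ∪ (Y : Finset H) := by
  apply Finset.Subset.antisymm
  · intro z hz
    rw [Submonoid.coe_mul] at hz
    obtain ⟨x, hx, y, hy, rfl⟩ := Finset.mem_mul.1 hz
    rcases hbr x y with h | h <;> rw [h] <;> simp [hx, hy]
  · intro z hz
    rw [Submonoid.coe_mul]
    rcases Finset.mem_union.1 hz with h | h
    · simpa using Finset.mul_mem_mul h (one_mem_val Y)
    · simpa using Finset.mul_mem_mul (one_mem_val X) h

lemma mem_prod (l : List (redPow H)) (x : H) :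
    x ∈ ((l.prod : redPow H) : Finset H) ↔ x = 1 ∨ ∃ A ∈ l, x ∈ (A : Finset H) := by
  induction l with
  | nil => simp [Finset.mem_one]
  | cons A l ih =>
    rw [List.prod_cons, val_mul hbr, Finset.mem_union, ih]
    constructor
    · rintro (h | (h | ⟨B, hB, hxB⟩))
      · exact Or.inr ⟨A, List.mem_cons_self, h⟩
      · exact Or.inl h
      · exact Or.inr ⟨B, List.mem_cons_of_mem _ hB, hxB⟩
    · rintro (h | ⟨B, hB, hxB⟩)
      · exact Or.inr (Or.inl h)
      · rcases List.mem_cons.1 hB with rfl | hB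
        · exact Or.inl hxB
        · exact Or.inr (Or.inr ⟨B, hB, hxB⟩)

lemma dvd_iff (X Y : redPow H) : dvdTS X Y ↔ (X : Finset H) ⊆ (Y : Finset H) := by
  constructor
  · rintro ⟨u, v, rfl⟩
    intro z hz
    rw [val_mul hbr, val_mul hbr]
    simp [hz]
  · intro h
    refine ⟨Y, Y, Subtype.ext ?_⟩
    rw [val_mul hbr, val_mul hbr]
    apply Finset.Subset.antisymm
    · intro z hz; simp [hz]
    · intro z hz
      rcases Finset.mem_union.1 hz with hz' | hz'
      · rcases Finset.mem_union.1 hz' with h2 | h2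
        · exact h2
        · exact h h2
      · exact hz'

lemma nonunit_iff (X : redPow H) : isNonUnitDivisor X ↔ (X : Finset H) ≠ {1} := by
  unfold isNonUnitDivisor
  rw [dvd_iff hbr]
  have h1 : ((1 : redPow H) : Finset H) = {1} := rfl
  rw [h1]
  constructor
  · intro h h'; exact h (by rw [h'])
  · intro h h'
    exact h (Finset.Subset.antisymm h' (Finset.singleton_subset_iff.2 (one_mem_val X)))

lemma irred_iff (A : redPow H) :
    isIrred A ↔ ∃ a, a ≠ 1 ∧ A = pair a := by
  constructor
  · rintro ⟨hnu, hA⟩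
    rw [nonunit_iff hbr] at hnu
    obtain ⟨a, ha, ha1⟩ : ∃ a ∈ (A : Finset H), a ≠ 1 := by
      by_contra h
      push_neg at h
      refine hnu (Finset.Subset.antisymm (fun x hx => ?_) ?_)
      · simp [h x hx]
      · exact Finset.singleton_subset_iff.2 (one_mem_val A)
    refine ⟨a, ha1, Subtype.ext ?_⟩
    by_contra hne
    obtain ⟨b, hb, hb'⟩ : ∃ b ∈ (A : Finset H), b ∉ (insert 1 {a} : Finset H) := by
      by_contra h
      push_neg at h
      refine hne (Finset.Subset.antisymm h ?_)
      intro x hx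
      rcases Finset.mem_insert.1 hx with rfl | hx
      · exact one_mem_val A
      · rwa [Finset.mem_singleton.1 hx]
    rw [Finset.mem_insert, Finset.mem_singleton] at hb'
    push_neg at hb'
    obtain ⟨hb1, hba⟩ := hb'
    have hab : a ≠ b := fun h => hba h.symm
    set X : redPow H := ⟨(A : Finset H).erase a,
      Finset.mem_erase.2 ⟨Ne.symm ha1, one_mem_val A⟩⟩ with hXdef
    set Y : redPow H := ⟨(A : Finset H).erase b,
      Finset.mem_erase.2 ⟨Ne.symm hb1, one_mem_val A⟩⟩ with hYdef
    have hXval : (X : Finset H) = (A : Finset H).erase a := rfl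
    have hYval : (Y : Finset H) = (A : Finset H).erase b := rfl
    have hXnu : isNonUnitDivisor X := by
      rw [nonunit_iff hbr, hXval]
      intro h
      have : b ∈ ({1} : Finset H) := by
        rw [← h]; exact Finset.mem_erase.2 ⟨hba, hb⟩
      exact hb1 (Finset.mem_singleton.1 this)
    have hYnu : isNonUnitDivisor Y := by
      rw [nonunit_iff hbr, hYval]
      intro h
      have : a ∈ ({1} : Finset H) := by
        rw [← h]; exact Finset.mem_erase.2 ⟨hab, ha⟩
      exact ha1 (Finset.mem_singleton.1 this)
    have hXp : properDvdTS X A := by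
      constructor
      · rw [dvd_iff hbr, hXval]; exact Finset.erase_subset _ _
      · rw [dvd_iff hbr, hXval]
        intro h
        exact (Finset.mem_erase.1 (h ha)).1 rfl
    have hYp : properDvdTS Y A := by
      constructor
      · rw [dvd_iff hbr, hYval]; exact Finset.erase_subset _ _
      · rw [dvd_iff hbr, hYval]
        intro h
        exact (Finset.mem_erase.1 (h hb)).1 rfl
    refine hA X Y hXnu hYnu hXp hYp (Subtype.ext ?_)
    rw [val_mul hbr, hXval, hYval]
    apply Finset.Subset.antisymm
    · intro z hz
      by_cases hza : z = a
      · subst hza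
        exact Finset.mem_union_right _ (Finset.mem_erase.2 ⟨hab, hz⟩)
      · exact Finset.mem_union_left _ (Finset.mem_erase.2 ⟨hza, hz⟩)
    · intro z hz
      rcases Finset.mem_union.1 hz with h | h
      · exact (Finset.mem_erase.1 h).2
      · exact (Finset.mem_erase.1 h).2
  · rintro ⟨a, ha1, rfl⟩
    have hpval : ((pair a : redPow H) : Finset H) = insert 1 {a} := rfl
    constructor
    · rw [nonunit_iff hbr, hpval]
      intro h
      have : a ∈ ({1} : Finset H) := by rw [← h]; simp
      exact ha1 (Finset.mem_singleton.1 this)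
    · intro X Y hX hY hXp hYp hEq
      rw [nonunit_iff hbr] at hX
      obtain ⟨hXd, hXnd⟩ := hXp
      rw [dvd_iff hbr] at hXd
      rw [dvd_iff hbr] at hXnd
      apply hXnd
      rw [hpval] at hXd
      have haX : a ∈ (X : Finset H) := by
        by_contra h
        apply hX
        apply Finset.Subset.antisymm
        · intro z hz
          rcases Finset.mem_insert.1 (hXd hz) with rfl | hz'
          · exact Finset.mem_singleton_self _
          · exact absurd (Finset.mem_singleton.1 hz' ▸ hz) h
        · exact Finset.singleton_subset_iff.2 (one_mem_val X)
      rw [hpval]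
      intro z hz
      rcases Finset.mem_insert.1 hz with rfl | hz'
      · exact one_mem_val X
      · rwa [Finset.mem_singleton.1 hz']

omit hbr

/-- canonical minimal factorization -/
noncomputable def canon (X : redPow H) : List (redPow H) :=
  ((X : Finset H).erase 1).toList.map pair

lemma pair_injOn {a b : H} (ha : a ≠ 1) (h : (pair a : redPow H) = pair b) : a = b := by
  have : (insert 1 {a} : Finset H) = insert 1 {b} := congrArg Subtype.val h
  have ha' : a ∈ (insert 1 {b} : Finset H) := by rw [← this]; simp
  rcases Finset.mem_insert.1 ha' with h' | h'
  · exact absurd h' ha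
  · exact Finset.mem_singleton.1 h'

lemma mem_canon (X : redPow H) (A : redPow H) :
    A ∈ canon X ↔ ∃ a, a ≠ 1 ∧ a ∈ (X : Finset H) ∧ A = pair a := by
  unfold canon
  rw [List.mem_map]
  constructor
  · rintro ⟨a, ha, rfl⟩
    rw [Finset.mem_toList, Finset.mem_erase] at ha
    exact ⟨a, ha.1, ha.2, rfl⟩
  · rintro ⟨a, ha1, haX, rfl⟩
    exact ⟨a, by rw [Finset.mem_toList, Finset.mem_erase]; exact ⟨ha1, haX⟩, rfl⟩

lemma canon_nodup (X : redPow H) : (canon X).Nodup := by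
  apply List.Nodup.map_on _ (Finset.nodup_toList _)
  intro a ha b hb h
  rw [Finset.mem_toList, Finset.mem_erase] at ha
  exact pair_injOn ha.1 h

include hbr

lemma canon_prod (X : redPow H) : (canon X).prod = X := by
  apply Subtype.ext
  apply Finset.ext
  intro x
  rw [mem_prod hbr]
  constructor
  · rintro (rfl | ⟨A, hA, hxA⟩)
    · exact one_mem_val X
    · obtain ⟨a, ha1, haX, rfl⟩ := (mem_canon X A).1 hA
      rcases Finset.mem_insert.1 hxA with rfl | h
      · exact one_mem_val X
      · rwa [Finset.mem_singleton.1 h]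
  · intro hx
    by_cases hx1 : x = 1
    · exact Or.inl hx1
    · exact Or.inr ⟨pair x, (mem_canon X _).2 ⟨x, hx1, hx, rfl⟩, by simp [pair]⟩

lemma canon_min (X : redPow H) :
    ∀ l' : List (redPow H), (↑l' : Multiset (redPow H)) < (↑(canon X) : Multiset (redPow H)) →
      l'.prod ≠ X := by
  intro l' hlt hprod
  obtain ⟨hle, hne⟩ := lt_iff_le_and_ne.1 hlt
  obtain ⟨A, hA⟩ : ∃ A, Multiset.count A (↑l' : Multiset (redPow H)) <
      Multiset.count A (↑(canon X) : Multiset (redPow H)) := by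
    by_contra h
    push_neg at h
    exact hne (le_antisymm hle (Multiset.le_iff_count.2 h))
  rw [Multiset.coe_count, Multiset.coe_count] at hA
  rw [lawful_beq_subsingleton instBEqOfDecidableEq Subtype.instBEq] at hA
  have hAc : A ∈ canon X := by
    rw [← List.count_pos_iff]
    omega
  have hAcount : List.count A (canon X) ≤ 1 :=
    List.nodup_iff_count_le_one.1 (canon_nodup X) A
  have hA0 : A ∉ l' := by
    rw [← List.count_eq_zero]
    omega
  obtain ⟨a₀, ha₀1, ha₀X, rfl⟩ := (mem_canon X A).1 hAc
  have ha₀prod : a₀ ∈ ((l'.prod : redPow H) : Finset H) := by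
    rw [hprod]; exact ha₀X
  rcases (mem_prod hbr l' a₀).1 ha₀prod with h | ⟨B, hB, haB⟩
  · exact ha₀1 h
  · have hBc : B ∈ canon X := by
      have := Multiset.subset_of_le hle
      simpa using this (by simpa using hB)
    obtain ⟨b, hb1, hbX, rfl⟩ := (mem_canon X B).1 hBc
    rcases Finset.mem_insert.1 haB with rfl | h'
    · exact ha₀1 rfl
    · have : a₀ = b := Finset.mem_singleton.1 h'
      subst this
      exact hA0 hB

lemma min_fact_eq (X : redPow H) (l : List (redPow H))
    (h : IsMinimalFactorization l X) :
    (↑l : Multiset (redPow H)) = (↑(canon X) : Multiset (redPow H)) := by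
  obtain ⟨⟨hirr, hprod⟩, hmin⟩ := h
  have hnd : l.Nodup := by
    rw [List.nodup_iff_count_le_one]
    by_contra hc
    push_neg at hc
    obtain ⟨A, hA2⟩ := hc
    have hmemA : A ∈ l := by
      rw [← List.count_pos_iff]; omega
    refine hmin (l.erase A) ?_ ?_
    · rw [lawful_beq_subsingleton Subtype.instBEq instBEqOfDecidableEq]; exact Multiset.erase_lt.2 (by simpa using hmemA)
    · rw [← hprod]
      apply Subtype.ext
      apply Finset.ext
      intro x
      rw [mem_prod hbr, mem_prod hbr]
      constructor
      · rintro (rfl | ⟨B, hB, hxB⟩)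
        · exact Or.inl rfl
        · exact Or.inr ⟨B, List.mem_of_mem_erase hB, hxB⟩
      · rintro (rfl | ⟨B, hB, hxB⟩)
        · exact Or.inl rfl
        · refine Or.inr ⟨B, ?_, hxB⟩
          by_cases hBA : B = A
          · subst hBA
            rw [← List.count_pos_iff, List.count_erase_self]
            omega
          · exact (List.mem_erase_of_ne hBA).2 hB
  have hcnd : (canon X).Nodup := canon_nodup X
  rw [Multiset.Nodup.ext (by exact hnd) (by exact hcnd)]
  intro A
  rw [Multiset.mem_coe, Multiset.mem_coe]
  constructor
  · intro hAl
    obtain ⟨a, ha1, rfl⟩ := (irred_iff hbr A).1 (hirr A hAl)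
    refine (mem_canon X _).2 ⟨a, ha1, ?_, rfl⟩
    rw [← hprod]
    exact (mem_prod hbr l a).2 (Or.inr ⟨pair a, hAl, by simp [pair]⟩)
  · intro hAc
    obtain ⟨a, ha1, haX, rfl⟩ := (mem_canon X A).1 hAc
    have : a ∈ ((l.prod : redPow H) : Finset H) := by rw [hprod]; exact haX
    rcases (mem_prod hbr l a).1 this with h | ⟨B, hB, haB⟩
    · exact absurd h ha1
    · obtain ⟨b, hb1, rfl⟩ := (irred_iff hbr B).1 (hirr B hB)
      rcases Finset.mem_insert.1 haB with rfl | h'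
      · exact absurd rfl ha1
      · have : a = b := Finset.mem_singleton.1 h'
        subst this
        exact hB

end Stmt18Aux

theorem stmt_18 {H : Type*} [Monoid H] [DecidableEq H]
    (hbr : ∀ x y : H, x * y = x ∨ x * y = y) : IsUmF (redPow H) := by
  constructor
  · intro X _
    refine ⟨Stmt18Aux.canon X, ⟨⟨?_, Stmt18Aux.canon_prod hbr X⟩, Stmt18Aux.canon_min hbr X⟩⟩
    intro A hA
    obtain ⟨a, ha1, _, rfl⟩ := (Stmt18Aux.mem_canon X A).1 hA
    exact (Stmt18Aux.irred_iff hbr _).2 ⟨a, ha1, rfl⟩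
  · intro X l l' hl hl'
    exact Multiset.coe_eq_coe.1
      ((Stmt18Aux.min_fact_eq hbr X l hl).trans (Stmt18Aux.min_fact_eq hbr X l' hl').symm)
end

section
/- Let H be a commutative monoid with group of units H^×. Then 𝒫fin,1(H) is UmF if and only if all of the following hold: (1) the set H ∖ H^× of non-units is closed under multiplication and is a breakable semigroup; (2) H^× has at most 2 elements; (3) uy = y for every u ∈ H^× and every y ∈ H ∖ H^× (i.e. H is the trivial ideal extension of H ∖ H^× by H^×). -/
open scoped Pointwise

abbrev RP (H : Type*) [Monoid H] [DecidableEq H] := ↥(redPow H)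

section Basic
variable {H : Type*} [CommMonoid H] [DecidableEq H]

lemma val_one : ((1 : RP H) : Finset H) = {1} := rfl

lemma val_mul (X Y : RP H) : ((X * Y : RP H) : Finset H) = (X : Finset H) * (Y : Finset H) := rfl

lemma one_mem_val (X : RP H) : (1 : H) ∈ (X : Finset H) := X.2

lemma subset_of_dvd {X Y : RP H} (h : dvdTS X Y) : (X : Finset H) ⊆ (Y : Finset H) := by
  obtain ⟨U, V, rfl⟩ := h
  intro x hx
  have : (1 : H) * x * 1 ∈ (U : Finset H) * (X : Finset H) * (V : Finset H) :=
    Finset.mul_mem_mul (Finset.mul_mem_mul (one_mem_val U) hx) (one_mem_val V)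
  simpa using this

lemma nonunit_iff {X : RP H} : isNonUnitDivisor X ↔ (X : Finset H) ≠ {1} := by
  constructor
  · intro h hX
    exact h ⟨1, 1, by simp [Subtype.ext_iff, hX, Finset.singleton_one]⟩
  · intro h hd
    exact h (Finset.Subset.antisymm (subset_of_dvd hd) (by simp [one_mem_val]))

end Basic
section Pairs
variable {H : Type*} [CommMonoid H] [DecidableEq H]

/-- The element `{1, a}` of the reduced power monoid. -/
def pairP (a : H) : RP H := ⟨{1, a}, Finset.mem_insert_self 1 {a}⟩

lemma pair_mul_pair (a b : H) : ({1, a} : Finset H) * {1, b} = {1, a, b, a * b} := by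
  ext x
  simp only [Finset.mem_mul, Finset.mem_insert, Finset.mem_singleton]
  constructor
  · rintro ⟨y, hy, z, hz, rfl⟩
    rcases hy with rfl | rfl <;> rcases hz with rfl | rfl <;> simp
  · rintro (rfl | rfl | rfl | rfl)
    · exact ⟨1, Or.inl rfl, 1, Or.inl rfl, mul_one 1⟩
    · exact ⟨x, Or.inr rfl, 1, Or.inl rfl, mul_one x⟩
    · exact ⟨1, Or.inl rfl, x, Or.inr rfl, one_mul x⟩
    · exact ⟨a, Or.inr rfl, b, Or.inr rfl, rfl⟩

lemma pairP_mul_pairP (a b : H) :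
    ((pairP a * pairP b : RP H) : Finset H) = {1, a, b, a * b} := by
  rw [val_mul]; exact pair_mul_pair a b

lemma pairP_nonunit {a : H} (ha : a ≠ 1) : isNonUnitDivisor (pairP a) := by
  rw [nonunit_iff]
  intro h
  have : a ∈ ({1} : Finset H) := h ▸ (by simp : a ∈ ({1, a} : Finset H))
  simp at this; exact ha this

lemma irred_of_val_pair {A : RP H} {a : H} (ha : a ≠ 1)
    (hval : (A : Finset H) = {1, a}) : isIrred A := by
  have hAp : A = pairP a := Subtype.ext hval
  subst hAp
  refine ⟨pairP_nonunit ha, ?_⟩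
  intro X Y hX hY hXa hYa _
  -- X is a nonunit proper divisor of pairP a : impossible
  have hsub : (X : Finset H) ⊆ {1, a} := subset_of_dvd hXa.1
  have hXne : (X : Finset H) ≠ {1} := nonunit_iff.mp hX
  have : (X : Finset H) = {1, a} := by
    apply Finset.Subset.antisymm hsub
    intro x hx
    rcases Finset.mem_insert.mp hx with rfl | hx
    · exact one_mem_val X
    · simp only [Finset.mem_singleton] at hx
      subst hx
      by_contra hmem
      apply hXne
      apply Finset.Subset.antisymm _ (by simp [one_mem_val])
      intro y hy
      rcases Finset.mem_insert.mp (hsub hy) with rfl | hy'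
      · simp
      · simp only [Finset.mem_singleton] at hy'; exact absurd (hy' ▸ hy) hmem
  have hXeq : X = pairP a := Subtype.ext this
  exact hXa.2 (hXeq ▸ ⟨1, 1, by simp⟩)

lemma pairP_irred {a : H} (ha : a ≠ 1) : isIrred (pairP a) :=
  irred_of_val_pair ha rfl

lemma neP {X Y : RP H} {a : H} (ha : a ∈ (X : Finset H)) (ha' : a ∉ (Y : Finset H)) :
    X ≠ Y := fun h => ha' (h ▸ ha)

end Pairs
section MinFac
variable {M' : Type*} [Monoid M']

lemma minFac_pair {A B X : M'} (hA : isIrred A) (hB : isIrred B)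
    (hprod : A * B = X) (h1 : (1 : M') ≠ X) (hAX : A ≠ X) (hBX : B ≠ X) :
    IsMinimalFactorization [A, B] X := by
  refine ⟨⟨?_, by simpa using hprod⟩, ?_⟩
  · intro a ha
    simp only [List.mem_cons, List.not_mem_nil, or_false] at ha
    rcases ha with rfl | rfl
    · exact hA
    · exact hB
  · intro l' hlt hprod'
    have hlen : l'.length < 2 := by
      have := Multiset.card_lt_card hlt
      simpa using this
    have hmem : ∀ x ∈ l', x = A ∨ x = B := by
      intro x hx
      have : x ∈ (↑[A, B] : Multiset M') :=
        Multiset.mem_of_le hlt.le (by simpa using hx)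
      simpa using this
    match l', hlen with
    | [], _ => exact h1 (by simpa using hprod')
    | [x], _ =>
      rcases hmem x (by simp) with rfl | rfl
      · exact hAX (by simpa using hprod')
      · exact hBX (by simpa using hprod')

lemma minFac_triple {A X : M'} (hA : isIrred A)
    (hprod : A * A * A = X) (h1 : (1 : M') ≠ X) (hAX : A ≠ X) (hAAX : A * A ≠ X) :
    IsMinimalFactorization [A, A, A] X := by
  refine ⟨⟨?_, by rw [← hprod]; simp [mul_assoc]⟩, ?_⟩
  · intro a ha
    simp only [List.mem_cons, List.not_mem_nil, or_false] at ha
    rcases ha with rfl | rfl | rfl <;> exact hA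
  · intro l' hlt hprod'
    have hlen : l'.length < 3 := by
      have := Multiset.card_lt_card hlt
      simpa using this
    have hmem : ∀ x ∈ l', x = A := by
      intro x hx
      have : x ∈ (↑[A, A, A] : Multiset M') :=
        Multiset.mem_of_le hlt.le (by simpa using hx)
      simpa using this
    match l', hlen with
    | [], _ => exact h1 (by simpa using hprod')
    | [x], _ =>
      obtain rfl := hmem x (by simp)
      exact hAX (by simpa using hprod')
    | [x, y], _ =>
      obtain rfl := hmem x (by simp)
      obtain rfl := hmem y (by simp)
      exact hAAX (by simpa [mul_assoc] using hprod')

lemma not_perm_pair_pair {A B C : M'} (hBC : B ≠ C) : ¬ ([A, B].Perm [A, C]) := by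
  intro p
  have : (↑[A, B] : Multiset M') = ↑[A, C] := Multiset.coe_eq_coe.mpr p
  have : ([B] : Multiset M') = [C] := by
    have h2 : (A ::ₘ ↑[B] : Multiset M') = A ::ₘ ↑[C] := by simpa using this
    exact (Multiset.cons_inj_right A).mp h2
  exact hBC (by simpa using this)

lemma not_perm_len {l l' : List M'} (h : l.length ≠ l'.length) : ¬ l.Perm l' :=
  fun p => h p.length_eq

end MinFac
section Forward
variable {H : Type*} [CommMonoid H] [DecidableEq H]

lemma mul_pair_val (s : Finset H) (b : H) : s * {1, b} = s ∪ s.image (· * b) := by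
  ext x
  simp only [Finset.mem_mul, Finset.mem_insert, Finset.mem_singleton, Finset.mem_union,
    Finset.mem_image]
  constructor
  · rintro ⟨y, hy, z, hz, rfl⟩
    rcases hz with rfl | rfl
    · exact Or.inl (by simpa using hy)
    · exact Or.inr ⟨y, hy, rfl⟩
  · rintro (hx | ⟨y, hy, rfl⟩)
    · exact ⟨x, hx, 1, Or.inl rfl, mul_one x⟩
    · exact ⟨y, hy, b, Or.inr rfl, rfl⟩

lemma square_of_umf (h : IsUmF (redPow H)) : ∀ a : H, a * a = 1 ∨ a * a = a := by
  intro a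
  by_contra hc
  push_neg at hc
  obtain ⟨h1, h2⟩ := hc
  have ha1 : a ≠ 1 := fun h => h1 (by rw [h, mul_one])
  set A := pairP a with hAdef
  set B := pairP (a * a) with hBdef
  have hA : isIrred A := pairP_irred ha1
  have hB : isIrred B := pairP_irred h1
  have hAB : A ≠ B := by
    refine neP (a := a) (by simp [hAdef, pairP]) ?_
    simp only [hBdef, pairP, Finset.mem_insert, Finset.mem_singleton]
    push_neg
    exact ⟨ha1, fun h => h2 h.symm⟩
  by_cases hc3 : a * (a * a) = 1 ∨ a * (a * a) = a ∨ a * (a * a) = a * a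
  · -- X = {1, a, a*a}
    have hXmem : (1 : H) ∈ ({1, a, a * a} : Finset H) := by simp
    set X : RP H := ⟨{1, a, a * a}, hXmem⟩ with hXdef
    have hAA : A * A = X := by
      apply Subtype.ext
      rw [pairP_mul_pairP]
      ext x; simp only [hXdef, Finset.mem_insert, Finset.mem_singleton]; tauto
    have hABX : A * B = X := by
      apply Subtype.ext
      rw [pairP_mul_pairP]
      ext x
      simp only [hXdef, Finset.mem_insert, Finset.mem_singleton]
      rcases hc3 with h3 | h3 | h3 <;> rw [h3] <;> tauto
    have haX : a ∈ (X : Finset H) := by simp [hXdef]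
    have haaX : a * a ∈ (X : Finset H) := by simp [hXdef]
    have h1X : (1 : RP H) ≠ X :=
      (neP haX (by simp [val_one, ha1])).symm
    have hAX : A ≠ X := (neP haaX (by simp [hAdef, pairP, h1, h2])).symm
    have hBX : B ≠ X := (neP haX (by
      simp only [hBdef, pairP, Finset.mem_insert, Finset.mem_singleton]
      push_neg
      exact ⟨ha1, fun h => h2 h.symm⟩)).symm
    have m1 := minFac_pair hA hA hAA h1X hAX hAX
    have m2 := minFac_pair hA hB hABX h1X hAX hBX
    exact not_perm_pair_pair hAB (h.2 X _ _ m1 m2)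
  · push_neg at hc3
    obtain ⟨h31, h32, h33⟩ := hc3
    have hXmem : (1 : H) ∈ ({1, a, a * a, a * (a * a)} : Finset H) := by simp
    set X : RP H := ⟨{1, a, a * a, a * (a * a)}, hXmem⟩ with hXdef
    have hAAval : ((A * A : RP H) : Finset H) = {1, a, a * a} := by
      rw [pairP_mul_pairP]
      ext x; simp only [Finset.mem_insert, Finset.mem_singleton]; tauto
    have hAAA : A * A * A = X := by
      apply Subtype.ext
      rw [val_mul, hAAval]
      show ({1, a, a * a} : Finset H) * {1, a} = _
      rw [mul_pair_val]
      ext x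
      simp only [hXdef, Finset.mem_union, Finset.mem_image, Finset.mem_insert, Finset.mem_singleton]
      constructor
      · rintro (hx | ⟨y, hy, rfl⟩)
        · rcases hx with rfl | rfl | rfl
          · exact Or.inl rfl
          · exact Or.inr (Or.inl rfl)
          · exact Or.inr (Or.inr (Or.inl rfl))
        · rcases hy with rfl | rfl | rfl
          · exact Or.inr (Or.inl (one_mul a))
          · exact Or.inr (Or.inr (Or.inl rfl))
          · exact Or.inr (Or.inr (Or.inr (mul_assoc a a a)))
      · rintro (rfl | rfl | rfl | rfl)
        · exact Or.inl (Or.inl rfl)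
        · exact Or.inl (Or.inr (Or.inl rfl))
        · exact Or.inl (Or.inr (Or.inr rfl))
        · exact Or.inr ⟨a * a, Or.inr (Or.inr rfl), mul_assoc a a a⟩
    have hABX : A * B = X := by
      apply Subtype.ext
      rw [pairP_mul_pairP]
    have haX : a ∈ (X : Finset H) := by simp [hXdef]
    have haaX : a * a ∈ (X : Finset H) := by simp [hXdef]
    have h3X : a * (a * a) ∈ (X : Finset H) := by simp [hXdef]
    have h1X : (1 : RP H) ≠ X := (neP haX (by simp [val_one, ha1])).symm
    have hAX : A ≠ X := (neP haaX (by simp [hAdef, pairP, h1, h2])).symm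
    have hAAX : A * A ≠ X := by
      refine (neP h3X ?_).symm
      rw [hAAval]
      simp only [Finset.mem_insert, Finset.mem_singleton]
      push_neg
      exact ⟨h31, h32, h33⟩
    have hBX : B ≠ X := (neP haX (by
      simp only [hBdef, pairP, Finset.mem_insert, Finset.mem_singleton]
      push_neg
      exact ⟨ha1, fun h => h2 h.symm⟩)).symm
    have m1 := minFac_triple hA hAAA h1X hAX hAAX
    have m2 := minFac_pair hA hB hABX h1X hAX hBX
    exact not_perm_len (by simp) (h.2 X _ _ m1 m2)

end Forward

section Forward2
variable {H : Type*} [CommMonoid H] [DecidableEq H]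

lemma not_umf_klein {u b : H} (huu : u * u = 1) (hu1 : u ≠ 1) (hb1 : b ≠ 1)
    (hbu : b ≠ u) (hub1 : u * b ≠ 1) (hubu : u * b ≠ u) (hubb : u * b ≠ b) :
    ¬ IsUmF (redPow H) := by
  intro h
  have hXmem : (1 : H) ∈ ({1, u, b, u * b} : Finset H) := by simp
  set X : RP H := ⟨{1, u, b, u * b}, hXmem⟩ with hXdef
  set A := pairP u with hAdef
  set B := pairP b with hBdef
  set C := pairP (u * b) with hCdef
  have hA : isIrred A := pairP_irred hu1
  have hB : isIrred B := pairP_irred hb1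
  have hC : isIrred C := pairP_irred hub1
  have hABX : A * B = X := Subtype.ext (pairP_mul_pairP u b)
  have hkey : u * (u * b) = b := by rw [← mul_assoc, huu, one_mul]
  have hACX : A * C = X := by
    apply Subtype.ext
    rw [pairP_mul_pairP, hkey]
    ext x
    simp only [hXdef, Finset.mem_insert, Finset.mem_singleton]
    tauto
  have huX : u ∈ (X : Finset H) := by simp [hXdef]
  have hbX : b ∈ (X : Finset H) := by simp [hXdef]
  have h1X : (1 : RP H) ≠ X := (neP huX (by simp [val_one, hu1])).symm
  have hAX : A ≠ X := (neP hbX (by simp [hAdef, pairP, hb1, hbu])).symm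
  have hBX : B ≠ X := (neP huX (by
    simp only [hBdef, pairP, Finset.mem_insert, Finset.mem_singleton]
    push_neg
    exact ⟨hu1, fun he => hbu he.symm⟩)).symm
  have hCX : C ≠ X := (neP huX (by
    simp only [hCdef, pairP, Finset.mem_insert, Finset.mem_singleton]
    push_neg
    exact ⟨hu1, fun he => hubu he.symm⟩)).symm
  have hBC : B ≠ C := neP (a := b) (by simp [hBdef, pairP]) (by
    simp only [hCdef, pairP, Finset.mem_insert, Finset.mem_singleton]
    push_neg
    exact ⟨hb1, fun h => hubb h.symm⟩)
  have m1 := minFac_pair hA hB hABX h1X hAX hBX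
  have m2 := minFac_pair hA hC hACX h1X hAX hCX
  exact not_perm_pair_pair hBC (h.2 X _ _ m1 m2)

lemma unit_sq_one (h : IsUmF (redPow H)) {u : H} (hu : IsUnit u) (hu1 : u ≠ 1) :
    u * u = 1 := by
  rcases square_of_umf h u with h' | h'
  · exact h'
  · exact absurd (hu.mul_left_cancel (by rw [h', mul_one])) hu1

lemma forward_units (h : IsUmF (redPow H)) : Set.encard {u : H | IsUnit u} ≤ 2 := by
  by_cases hex : ∃ u : H, IsUnit u ∧ u ≠ 1
  · obtain ⟨u, hu, hu1⟩ := hex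
    have hclaim : ∀ v : H, IsUnit v → v = 1 ∨ v = u := by
      intro v hv
      by_contra hc
      push_neg at hc
      obtain ⟨hv1, hvu⟩ := hc
      have huu := unit_sq_one h hu hu1
      have huv1 : u * v ≠ 1 := by
        intro he
        apply hvu
        have : u * (u * v) = u * 1 := by rw [he]
        rw [← mul_assoc, huu, one_mul, mul_one] at this
        exact this
      have huvu : u * v ≠ u := by
        intro he
        exact hv1 (hu.mul_left_cancel (by rw [he, mul_one]))
      have huvv : u * v ≠ v := by
        intro he
        exact hu1 (hv.mul_right_cancel (by rw [one_mul]; exact he))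
      exact not_umf_klein huu hu1 hv1 hvu huv1 huvu huvv h
    have hsub : {u' : H | IsUnit u'} ⊆ {1, u} := by
      intro v hv
      rcases hclaim v hv with rfl | rfl <;> simp
    calc Set.encard {u' : H | IsUnit u'} ≤ Set.encard ({1, u} : Set H) :=
          Set.encard_mono hsub
      _ ≤ 2 := by
          rw [Set.encard_pair (Ne.symm hu1)]
  · push_neg at hex
    have hsub : {u' : H | IsUnit u'} ⊆ {1} := fun v hv => hex v hv
    calc Set.encard {u' : H | IsUnit u'} ≤ Set.encard ({1} : Set H) := Set.encard_mono hsub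
      _ ≤ 2 := by rw [Set.encard_singleton]; norm_num

lemma forward_action (h : IsUmF (redPow H)) :
    ∀ u y : H, IsUnit u → ¬ IsUnit y → u * y = y := by
  intro u y hu hy
  by_contra hc
  have hu1 : u ≠ 1 := by rintro rfl; exact hc (one_mul y)
  have huu := unit_sq_one h hu hu1
  have hy1 : y ≠ 1 := fun he => hy (he ▸ isUnit_one)
  have hyu : y ≠ u := fun he => hy (he ▸ hu)
  have huy1 : u * y ≠ 1 := fun he => hy (isUnit_of_mul_isUnit_right (he ▸ isUnit_one))
  have huyu : u * y ≠ u := by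
    intro he
    exact hy1 (hu.mul_left_cancel (by rw [he, mul_one]))
  exact not_umf_klein huu hu1 hy1 hyu huy1 huyu hc h

end Forward2
section Forward3
variable {H : Type*} [CommMonoid H] [DecidableEq H]

lemma forward_breakable (h : IsUmF (redPow H)) :
    ∀ x y : H, ¬ IsUnit x → ¬ IsUnit y → x * y = x ∨ x * y = y := by
  intro x y hx hy
  by_contra hc
  push_neg at hc
  obtain ⟨hc1, hc2⟩ := hc
  -- idempotency
  have hxx : x * x = x := by
    rcases square_of_umf h x with h' | h'
    · exact absurd (IsUnit.of_mul_eq_one x h') hx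
    · exact h'
  have hyy : y * y = y := by
    rcases square_of_umf h y with h' | h'
    · exact absurd (IsUnit.of_mul_eq_one y h') hy
    · exact h'
  have hx1 : x ≠ 1 := fun he => hx (he ▸ isUnit_one)
  have hy1 : y ≠ 1 := fun he => hy (he ▸ isUnit_one)
  have hxy : x ≠ y := by
    rintro rfl
    exact hc1 hxx
  have hxynu : ¬ IsUnit (x * y) := fun hu => hx (isUnit_of_mul_isUnit_left hu)
  have hxy1 : x * y ≠ 1 := fun he => hxynu (he ▸ isUnit_one)
  -- elements
  have hXmem : (1 : H) ∈ ({1, x, y, x * y} : Finset H) := by simp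
  set X : RP H := ⟨{1, x, y, x * y}, hXmem⟩ with hXdef
  have hDmem : (1 : H) ∈ ({1, x, y} : Finset H) := by simp
  set D : RP H := ⟨{1, x, y}, hDmem⟩ with hDdef
  set A := pairP x with hAdef
  set B := pairP y with hBdef
  have hA : isIrred A := pairP_irred hx1
  have hB : isIrred B := pairP_irred hy1
  have hABX : A * B = X := Subtype.ext (pair_mul_pair x y)
  have hDA : D * A = X := by
    apply Subtype.ext
    rw [val_mul]
    show ({1, x, y} : Finset H) * {1, x} = {1, x, y, x * y}
    rw [mul_pair_val]
    ext z
    simp only [Finset.mem_union, Finset.mem_image, Finset.mem_insert, Finset.mem_singleton]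
    constructor
    · rintro (hz | ⟨w, hw, rfl⟩)
      · tauto
      · rcases hw with h' | h' | h' <;> rw [h']
        · exact Or.inr (Or.inl (one_mul x))
        · exact Or.inr (Or.inl hxx)
        · exact Or.inr (Or.inr (Or.inr (mul_comm y x)))
    · rintro (rfl | rfl | rfl | rfl)
      · tauto
      · tauto
      · tauto
      · exact Or.inr ⟨y, Or.inr (Or.inr rfl), mul_comm y x⟩
  -- D is irreducible
  have hDval : (D : Finset H) = {1, x, y} := rfl
  have hDnonunit : isNonUnitDivisor D := by
    rw [nonunit_iff]
    intro hv
    have hxD : x ∈ (D : Finset H) := by simp [hDdef]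
    rw [hv] at hxD
    exact hx1 (by simpa using hxD)
  have hclassify : ∀ Y : RP H, isNonUnitDivisor Y → properDvdTS Y D →
      Y = pairP x ∨ Y = pairP y := by
    intro Y hYnu hYD
    have hsub : (Y : Finset H) ⊆ {1, x, y} := subset_of_dvd hYD.1
    have hYne1 : (Y : Finset H) ≠ {1} := nonunit_iff.mp hYnu
    have hYneD : (Y : Finset H) ≠ {1, x, y} := by
      intro hv
      exact hYD.2 ((Subtype.ext hv : Y = D) ▸ ⟨1, 1, by simp⟩)
    by_cases hxY : x ∈ (Y : Finset H) <;> by_cases hyY : y ∈ (Y : Finset H)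
    · exfalso
      apply hYneD
      apply Finset.Subset.antisymm hsub
      intro z hz
      rcases Finset.mem_insert.mp hz with rfl | hz
      · exact one_mem_val Y
      · rcases Finset.mem_insert.mp hz with rfl | hz
        · exact hxY
        · rw [Finset.mem_singleton] at hz
          exact hz ▸ hyY
    · left
      apply Subtype.ext
      apply Finset.Subset.antisymm
      · intro z hz
        rcases Finset.mem_insert.mp (hsub hz) with rfl | hz'
        · simp [pairP]
        · rcases Finset.mem_insert.mp hz' with rfl | hz'
          · simp [pairP]
          · rw [Finset.mem_singleton] at hz'
            exact absurd (hz' ▸ hz) hyY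
      · intro z hz
        rcases Finset.mem_insert.mp hz with rfl | hz
        · exact one_mem_val Y
        · rw [Finset.mem_singleton] at hz
          exact hz ▸ hxY
    · right
      apply Subtype.ext
      apply Finset.Subset.antisymm
      · intro z hz
        rcases Finset.mem_insert.mp (hsub hz) with rfl | hz'
        · simp [pairP]
        · rcases Finset.mem_insert.mp hz' with rfl | hz'
          · exact absurd hz hxY
          · rw [Finset.mem_singleton] at hz'
            subst hz'
            simp [pairP]
      · intro z hz
        rcases Finset.mem_insert.mp hz with rfl | hz
        · exact one_mem_val Y
        · rw [Finset.mem_singleton] at hz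
          exact hz ▸ hyY
    · exfalso
      apply hYne1
      apply Finset.Subset.antisymm _ (by simp [one_mem_val])
      intro z hz
      rcases Finset.mem_insert.mp (hsub hz) with rfl | hz'
      · simp
      · rcases Finset.mem_insert.mp hz' with rfl | hz'
        · exact absurd hz hxY
        · rw [Finset.mem_singleton] at hz'
          exact absurd (hz' ▸ hz) hyY
  have hD : isIrred D := by
    refine ⟨hDnonunit, ?_⟩
    intro Y Z hYnu hZnu hYD hZD heq
    have hxy2 : x * y ∉ (D : Finset H) := by
      simp only [hDval, Finset.mem_insert, Finset.mem_singleton]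
      push_neg
      exact ⟨hxy1, hc1, hc2⟩
    rcases hclassify Y hYnu hYD with rfl | rfl <;>
      rcases hclassify Z hZnu hZD with rfl | rfl
    · -- D = pairP x * pairP x,  val = {1,x,x,x*x} ∋ y impossible
      have hyD : y ∈ (D : Finset H) := by simp [hDdef]
      rw [heq] at hyD
      rw [pairP_mul_pairP, hxx] at hyD
      simp only [Finset.mem_insert, Finset.mem_singleton] at hyD
      rcases hyD with h' | h' | h' | h' <;> first
        | exact hy1 h' | exact hxy h'.symm
    · -- D = pairP x * pairP y : contains x*y
      apply hxy2
      rw [heq, pairP_mul_pairP]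
      simp
    · apply hxy2
      rw [heq, pairP_mul_pairP]
      simp only [Finset.mem_insert, Finset.mem_singleton]
      right; right; right; exact mul_comm x y
    · have hxD : x ∈ (D : Finset H) := by simp [hDdef]
      rw [heq] at hxD
      rw [pairP_mul_pairP, hyy] at hxD
      simp only [Finset.mem_insert, Finset.mem_singleton] at hxD
      rcases hxD with h' | h' | h' | h' <;> first
        | exact hx1 h' | exact hxy h'
  -- inequalities
  have hxX : x ∈ (X : Finset H) := by simp [hXdef]
  have hyX : y ∈ (X : Finset H) := by simp [hXdef]
  have hxyX : x * y ∈ (X : Finset H) := by simp [hXdef]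
  have h1X : (1 : RP H) ≠ X := (neP hxX (by simp [val_one, hx1])).symm
  have hAX : A ≠ X := (neP hyX (by
    simp only [hAdef, pairP, Finset.mem_insert, Finset.mem_singleton]
    push_neg
    exact ⟨hy1, fun he => hxy he.symm⟩)).symm
  have hBX : B ≠ X := (neP hxX (by
    simp only [hBdef, pairP, Finset.mem_insert, Finset.mem_singleton]
    push_neg
    exact ⟨hx1, hxy⟩)).symm
  have hDX : D ≠ X := (neP hxyX (by
    simp only [hDval, Finset.mem_insert, Finset.mem_singleton]
    push_neg
    exact ⟨hxy1, hc1, hc2⟩)).symm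
  have hDA' : D ≠ A := neP (a := y) (by simp [hDdef]) (by
    simp only [hAdef, pairP, Finset.mem_insert, Finset.mem_singleton]
    push_neg
    exact ⟨hy1, fun he => hxy he.symm⟩)
  have hDB' : D ≠ B := neP (a := x) (by simp [hDdef]) (by
    simp only [hBdef, pairP, Finset.mem_insert, Finset.mem_singleton]
    push_neg
    exact ⟨hx1, hxy⟩)
  have m1 := minFac_pair hA hB hABX h1X hAX hBX
  have m2 := minFac_pair hD hA hDA h1X hDX hAX
  have p := h.2 X _ _ m2 m1
  have hmemD : D ∈ [A, B] := p.subset (by simp)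
  simp only [List.mem_cons, List.mem_singleton, List.not_mem_nil, or_false] at hmemD
  rcases hmemD with he | he
  · exact hDA' he
  · exact hDB' he

end Forward3
section Backward
variable {H : Type*} [CommMonoid H] [DecidableEq H]

lemma unit_eq_of_card (hcard : Set.encard {u : H | IsUnit u} ≤ 2)
    {u v : H} (hu : IsUnit u) (hv : IsUnit v) (hu1 : u ≠ 1) (hv1 : v ≠ 1) : u = v := by
  by_contra hne
  have hsub : ({1, u, v} : Set H) ⊆ {w | IsUnit w} := by
    rintro w (rfl | rfl | rfl)
    · exact isUnit_one
    · exact hu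
    · exact hv
  have h3 : ({1, u, v} : Set H).encard = 3 := by
    rw [Set.encard_insert_of_notMem (by
      simp only [Set.mem_insert_iff, Set.mem_singleton_iff]
      push_neg
      exact ⟨Ne.symm hu1, Ne.symm hv1⟩), Set.encard_pair hne]
    rfl
  have := le_trans (h3 ▸ Set.encard_mono hsub) hcard
  norm_num at this

lemma val_mul_eq_union
    (hbrk : ∀ x y : H, ¬ IsUnit x → ¬ IsUnit y → x * y = x ∨ x * y = y)
    (hcard : Set.encard {u : H | IsUnit u} ≤ 2)
    (hact : ∀ u y : H, IsUnit u → ¬ IsUnit y → u * y = y)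
    (X Y : RP H) : ((X * Y : RP H) : Finset H) = (X : Finset H) ∪ (Y : Finset H) := by
  rw [val_mul]
  ext z
  simp only [Finset.mem_mul, Finset.mem_union]
  constructor
  · rintro ⟨a, ha, b, hb, rfl⟩
    by_cases hua : IsUnit a <;> by_cases hub : IsUnit b
    · by_cases ha1 : a = 1
      · subst ha1; rw [one_mul]; exact Or.inr hb
      · by_cases hb1 : b = 1
        · subst hb1; rw [mul_one]; exact Or.inl ha
        · obtain rfl : a = b := unit_eq_of_card hcard hua hub ha1 hb1
          have haa : a * a = 1 := by
            by_cases h2 : a * a = 1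
            · exact h2
            · have := unit_eq_of_card hcard (hua.mul hua) hua h2 ha1
              exact absurd (hua.mul_left_cancel (by rw [this, mul_one])) ha1
          rw [haa]; exact Or.inl (one_mem_val X)
    · rw [hact a b hua hub]; exact Or.inr hb
    · rw [mul_comm, hact b a hub hua]; exact Or.inl ha
    · rcases hbrk a b hua hub with he | he <;> rw [he]
      · exact Or.inl ha
      · exact Or.inr hb
  · rintro (hz | hz)
    · exact ⟨z, hz, 1, one_mem_val Y, mul_one z⟩
    · exact ⟨1, one_mem_val X, z, hz, one_mul z⟩

variable (hU : ∀ X Y : RP H, ((X * Y : RP H) : Finset H) = (X : Finset H) ∪ (Y : Finset H))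

include hU

lemma dvd_iff_subset {X Y : RP H} : dvdTS X Y ↔ (X : Finset H) ⊆ (Y : Finset H) := by
  constructor
  · exact subset_of_dvd
  · intro hs
    refine ⟨Y, Y, Subtype.ext ?_⟩
    rw [hU, hU, Finset.union_eq_left.mpr hs, Finset.union_self]

lemma mem_prod_val (l : List (RP H)) (x : H) :
    x ∈ ((l.prod : RP H) : Finset H) ↔ x = 1 ∨ ∃ B ∈ l, x ∈ (B : Finset H) := by
  induction l with
  | nil => simp [val_one]
  | cons B t ih =>
    rw [List.prod_cons, hU]
    simp only [Finset.mem_union, ih, List.mem_cons]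
    constructor
    · rintro (hx | rfl | ⟨C, hC, hxC⟩)
      · exact Or.inr ⟨B, Or.inl rfl, hx⟩
      · exact Or.inl rfl
      · exact Or.inr ⟨C, Or.inr hC, hxC⟩
    · rintro (rfl | ⟨C, hC | hC, hxC⟩)
      · exact Or.inr (Or.inl rfl)
      · exact Or.inl (hC ▸ hxC)
      · exact Or.inr (Or.inr ⟨C, hC, hxC⟩)

lemma irred_val {A : RP H} (hA : isIrred A) :
    ∃ a : H, a ≠ 1 ∧ (A : Finset H) = {1, a} := by
  have hne1 : (A : Finset H) ≠ {1} := nonunit_iff.mp hA.1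
  have hex : ∃ a ∈ (A : Finset H), a ≠ 1 := by
    by_contra hc
    push_neg at hc
    exact hne1 (Finset.Subset.antisymm (fun z hz => by simp [hc z hz])
      (by simp [one_mem_val]))
  obtain ⟨a, haA, ha1⟩ := hex
  have hclaim : ∀ b ∈ (A : Finset H), b = 1 ∨ b = a := by
    intro b hb
    by_contra hcb
    push_neg at hcb
    obtain ⟨hb1, hba⟩ := hcb
    have h1Y : (1 : H) ∈ (A : Finset H).erase b :=
      Finset.mem_erase.mpr ⟨Ne.symm hb1, one_mem_val A⟩
    set Y : RP H := ⟨(A : Finset H).erase b, h1Y⟩ with hYdef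
    set Z := pairP b with hZdef
    have haY : a ∈ (Y : Finset H) :=
      Finset.mem_erase.mpr ⟨fun he => hba he.symm, haA⟩
    have hYnu : isNonUnitDivisor Y := by
      rw [nonunit_iff]
      intro hv
      rw [hv] at haY
      exact ha1 (by simpa using haY)
    have hZnu : isNonUnitDivisor Z := pairP_nonunit hb1
    have hYA : properDvdTS Y A := by
      refine ⟨(dvd_iff_subset hU).mpr (Finset.erase_subset _ _), ?_⟩
      intro hd
      have := subset_of_dvd hd hb
      exact (Finset.mem_erase.mp this).1 rfl
    have hZA : properDvdTS Z A := by
      refine ⟨(dvd_iff_subset hU).mpr ?_, ?_⟩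
      · intro z hz
        rcases Finset.mem_insert.mp hz with rfl | hz
        · exact one_mem_val A
        · rw [Finset.mem_singleton] at hz
          exact hz ▸ hb
      · intro hd
        have := subset_of_dvd hd haA
        simp only [hZdef, pairP, Finset.mem_insert, Finset.mem_singleton] at this
        rcases this with h' | h'
        · exact ha1 h'
        · exact hba h'.symm
    have heq : A = Y * Z := by
      apply Subtype.ext
      rw [hU]
      ext z
      simp only [hYdef, hZdef, pairP, Finset.mem_union, Finset.mem_erase, Finset.mem_insert,
        Finset.mem_singleton]
      constructor
      · intro hz
        by_cases hzb : z = b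
        · exact Or.inr (Or.inr hzb)
        · exact Or.inl ⟨hzb, hz⟩
      · rintro (⟨_, hz⟩ | rfl | rfl)
        · exact hz
        · exact one_mem_val A
        · exact hb
    exact hA.2 Y Z hYnu hZnu hYA hZA heq
  exact ⟨a, ha1, Finset.Subset.antisymm
    (fun z hz => by simpa using hclaim z hz)
    (by
      intro z hz
      rcases Finset.mem_insert.mp hz with rfl | hz
      · exact one_mem_val A
      · rw [Finset.mem_singleton] at hz
        exact hz ▸ haA)⟩

end Backward
section Backward2
variable {H : Type*} [CommMonoid H] [DecidableEq H]

lemma pairP_inj : Function.Injective (pairP (H := H)) := by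
  intro a b hab
  have hval : ({1, a} : Finset H) = {1, b} := congrArg Subtype.val hab
  have ha : a ∈ ({1, b} : Finset H) := hval ▸ (by simp : a ∈ ({1, a} : Finset H))
  have hb : b ∈ ({1, a} : Finset H) := hval ▸ (by simp : b ∈ ({1, b} : Finset H))
  simp only [Finset.mem_insert, Finset.mem_singleton] at ha hb
  rcases ha with ha | ha
  · rcases hb with hb | hb
    · exact ha.trans hb.symm
    · exact hb.symm
  · exact ha

variable (hU : ∀ X Y : RP H, ((X * Y : RP H) : Finset H) = (X : Finset H) ∪ (Y : Finset H))
include hU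

lemma existence_minfac (X : RP H) (hX : X ≠ 1) : ∃ l : List (RP H), IsMinimalFactorization l X := by
  classical
  set l : List (RP H) := ((X : Finset H).erase 1).toList.map pairP with hldef
  have hnodup : l.Nodup := ((Finset.nodup_toList _).map pairP_inj)
  have hmem : ∀ B ∈ l, ∃ a, a ∈ (X : Finset H).erase 1 ∧ B = pairP a := by
    intro B hB
    rw [hldef, List.mem_map] at hB
    obtain ⟨a, ha, rfl⟩ := hB
    exact ⟨a, Finset.mem_toList.mp ha, rfl⟩
  have hprod : l.prod = X := by
    apply Subtype.ext
    ext z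
    rw [mem_prod_val hU]
    constructor
    · rintro (rfl | ⟨B, hB, hzB⟩)
      · exact one_mem_val X
      · obtain ⟨a, ha, rfl⟩ := hmem B hB
        simp only [pairP, Finset.mem_insert, Finset.mem_singleton] at hzB
        rcases hzB with rfl | rfl
        · exact one_mem_val X
        · exact Finset.mem_of_mem_erase ha
    · intro hz
      by_cases hz1 : z = 1
      · exact Or.inl hz1
      · refine Or.inr ⟨pairP z, ?_, by simp [pairP]⟩
        rw [hldef, List.mem_map]
        exact ⟨z, Finset.mem_toList.mpr (Finset.mem_erase.mpr ⟨hz1, hz⟩), rfl⟩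
  refine ⟨l, ⟨⟨?_, hprod⟩, ?_⟩⟩
  · intro B hB
    obtain ⟨a, ha, rfl⟩ := hmem B hB
    exact pairP_irred (Finset.mem_erase.mp ha).1
  · intro l' hlt hpe
    obtain ⟨u, hu⟩ := Multiset.le_iff_exists_add.mp hlt.le
    have hune : u ≠ 0 := by
      rintro rfl
      rw [add_zero] at hu
      exact hlt.ne hu.symm
    obtain ⟨B, hBu⟩ := Multiset.exists_mem_of_ne_zero hune
    have hBl : B ∈ l := by
      have : B ∈ (↑l : Multiset (RP H)) := by
        rw [hu]
        exact Multiset.mem_add.mpr (Or.inr hBu)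
      simpa using this
    obtain ⟨a, ha, rfl⟩ := hmem B hBl
    have hB_notmem : pairP a ∉ l' := by
      intro hmem'
      have hc1 : Multiset.count (pairP a) (↑l : Multiset (RP H)) = 1 :=
        Multiset.count_eq_one_of_mem (Multiset.coe_nodup.mpr hnodup) (by simpa using hBl)
      have : Multiset.count (pairP a) (↑l : Multiset (RP H)) =
          Multiset.count (pairP a) (↑l' : Multiset (RP H)) + Multiset.count (pairP a) u := by
        rw [hu, Multiset.count_add]
      have h1' : 0 < Multiset.count (pairP a) (↑l' : Multiset (RP H)) :=
        Multiset.count_pos.mpr (by simpa using hmem')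
      have h2' : 0 < Multiset.count (pairP a) u := Multiset.count_pos.mpr hBu
      omega
    have haX : a ∈ (X : Finset H) := Finset.mem_of_mem_erase ha
    have ha1 : a ≠ 1 := (Finset.mem_erase.mp ha).1
    rw [← hpe] at haX
    rcases (mem_prod_val hU l' a).mp haX with rfl | ⟨C, hC, haC⟩
    · exact ha1 rfl
    · have hCl : C ∈ l := by
        have : C ∈ (↑l : Multiset (RP H)) := Multiset.mem_of_le hlt.le (by simpa using hC)
        simpa using this
      obtain ⟨c, hc, rfl⟩ := hmem C hCl
      simp only [pairP, Finset.mem_insert, Finset.mem_singleton] at haC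
      rcases haC with rfl | rfl
      · exact ha1 rfl
      · exact hB_notmem hC

lemma uniqueness_minfac (X : RP H) (l : List (RP H)) (hl : IsMinimalFactorization l X) :
    ∀ B : RP H, (B ∈ l ↔ ∃ a ∈ (X : Finset H).erase 1, B = pairP a) := by
  intro B
  constructor
  · intro hB
    obtain ⟨a, ha1, haval⟩ := irred_val hU (hl.1.1 B hB)
    have haX : a ∈ (X : Finset H) := by
      rw [← hl.1.2]
      exact (mem_prod_val hU l a).mpr (Or.inr ⟨B, hB, by rw [haval]; simp⟩)
    exact ⟨a, Finset.mem_erase.mpr ⟨ha1, haX⟩, Subtype.ext haval⟩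
  · rintro ⟨a, ha, rfl⟩
    have ha1 : a ≠ 1 := (Finset.mem_erase.mp ha).1
    have haX : a ∈ (X : Finset H) := Finset.mem_of_mem_erase ha
    rw [← hl.1.2] at haX
    rcases (mem_prod_val hU l a).mp haX with rfl | ⟨C, hC, haC⟩
    · exact absurd rfl ha1
    · obtain ⟨c, hc1, hcval⟩ := irred_val hU (hl.1.1 C hC)
      rw [hcval] at haC
      simp only [Finset.mem_insert, Finset.mem_singleton] at haC
      rcases haC with rfl | rfl
      · exact absurd rfl ha1
      · exact (Subtype.ext hcval : C = pairP a) ▸ hC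

lemma nodup_minfac (X : RP H) (l : List (RP H)) (hl : IsMinimalFactorization l X) :
    l.Nodup := by
  classical
  by_contra hnd
  obtain ⟨B, hcount⟩ : ∃ B, 1 < l.count B := by
    by_contra hc
    push_neg at hc
    exact hnd (List.nodup_iff_count_le_one.mpr hc)
  have hBl : B ∈ l := by
    rw [← List.count_pos_iff]
    omega
  have hlt : (↑(l.erase B) : Multiset (RP H)) < ↑l := by
    have h' : (↑l : Multiset (RP H)).erase B < ↑l := Multiset.erase_lt.mpr (by simpa using hBl)
    rw [Multiset.coe_erase] at h'
    convert h'
  apply hl.2 (l.erase B) hlt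
  have hBe : B ∈ l.erase B := by
    rw [← List.count_pos_iff, List.count_erase_self]
    omega
  have hsame : ∀ C : RP H, C ∈ l.erase B ↔ C ∈ l := by
    intro C
    constructor
    · exact fun h => List.mem_of_mem_erase h
    · intro h
      by_cases hCB : C = B
      · exact hCB ▸ hBe
      · exact (List.mem_erase_of_ne hCB).mpr h
  apply Subtype.ext
  ext z
  rw [mem_prod_val hU]
  conv_rhs => rw [← hl.1.2]
  rw [mem_prod_val hU]
  simp only [hsame]

end Backward2

theorem stmt_19 {H : Type*} [CommMonoid H] [DecidableEq H] :
    IsUmF (redPow H) ↔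
      (∀ x y : H, ¬ IsUnit x → ¬ IsUnit y → ¬ IsUnit (x * y)) ∧
      (∀ x y : H, ¬ IsUnit x → ¬ IsUnit y → x * y = x ∨ x * y = y) ∧
      Set.encard {u : H | IsUnit u} ≤ 2 ∧
      (∀ u y : H, IsUnit u → ¬ IsUnit y → u * y = y) := by
  constructor
  · intro h
    exact ⟨fun x y hx _ hu => hx (isUnit_of_mul_isUnit_left hu),
      forward_breakable h, forward_units h, forward_action h⟩
  · rintro ⟨-, hbrk, hcard, hact⟩
    have hU := val_mul_eq_union hbrk hcard hact
    constructor
    · intro X hX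
      exact existence_minfac hU X hX
    · intro X l l' hl hl'
      rw [List.perm_ext_iff_of_nodup (nodup_minfac hU X l hl) (nodup_minfac hU X l' hl')]
      intro B
      rw [uniqueness_minfac hU X l hl B, uniqueness_minfac hU X l' hl' B]
end
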